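/- Let a, c be real numbers and ε > 1. Then, as λ → +∞, the ratio of Gamma functions G(λ) := Γ(c+λ)·Γ(1+a−c+(ε−1)λ)/Γ(a+ελ) is asymptotically equivalent to √(2πλ)·ε^{1/2−a−ελ}·(ε−1)^{1/2+a−c+(ε−1)λ}; that is, the quotient of the two sides tends to 1 as λ → +∞. -/

import Mathlib

set_option maxHeartbeats 1000000

open Real Filter

section StirlingAux
open Topology Nat

lemma aux1 (v β : ℝ) : Tendsto (fun y : ℝ => (y + β) * Real.log (1 + v / y)) atTop (𝓝 v) := by
  have h1 := Real.tendsto_mul_log_one_add_div_atTop v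
  have h2 : Tendsto (fun y : ℝ => 1 + v / y) atTop (𝓝 1) := by
    simpa [div_eq_mul_inv] using (tendsto_inv_atTop_zero.const_mul v).const_add 1
  have h3 : Tendsto (fun y : ℝ => Real.log (1 + v / y)) atTop (𝓝 0) := by
    have := (Real.continuousAt_log (by norm_num : (1:ℝ) ≠ 0)).tendsto.comp h2
    simpa [Function.comp_def] using this
  have := h1.add (h3.const_mul β)
  simp only [mul_zero, add_zero] at this
  refine this.congr fun y => by ring

lemma En_tendsto : Tendsto (fun n : ℕ => Real.log (n !) -
    (Real.log (2 * π) / 2 + ((n : ℝ) + 1/2) * Real.log n - n)) atTop (𝓝 0) := by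
  have hpi : (0:ℝ) < π := pi_pos
  have h1 : Tendsto (fun n : ℕ => Stirling.stirlingSeq n / Real.sqrt π) atTop (𝓝 1) := by
    have := Stirling.tendsto_stirlingSeq_sqrt_pi.div_const (Real.sqrt π)
    rwa [div_self (by positivity : Real.sqrt π ≠ 0)] at this
  have h2 : Tendsto (fun n : ℕ => Real.log (Stirling.stirlingSeq n / Real.sqrt π)) atTop (𝓝 0) := by
    have := (Real.continuousAt_log (by norm_num : (1:ℝ) ≠ 0)).tendsto.comp h1
    simpa [Function.comp_def] using this
  refine h2.congr' ?_
  filter_upwards [eventually_ge_atTop 1] with n hn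
  have hn0 : (0:ℝ) < n := by exact_mod_cast hn
  have hfac : (0:ℝ) < n ! := by exact_mod_cast Nat.factorial_pos n
  rw [Stirling.stirlingSeq, Real.log_div (by positivity) (by positivity),
    Real.log_div hfac.ne' (by positivity),
    Real.log_mul (by positivity) (by positivity), Real.log_pow,
    Real.log_sqrt (by positivity), Real.log_div hn0.ne' (Real.exp_pos 1).ne',
    Real.log_mul two_ne_zero hn0.ne', Real.log_exp, Real.log_sqrt pi_pos.le,
    Real.log_mul two_ne_zero hpi.ne']
  push_cast
  ring


noncomputable def Ew (n : ℕ) : ℝ :=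
  Real.log (n !) - (Real.log (2 * π) / 2 + ((n : ℝ) + 1/2) * Real.log n - n)

lemma Ew_tendsto : Tendsto Ew atTop (𝓝 0) := En_tendsto

lemma key_sandwich (x : ℝ) (hx : 2 ≤ x) :
    Ew ⌊x⌋₊ - 3 / (⌊x⌋₊ : ℝ) ≤ Real.log (Real.Gamma x) -
      (Real.log (2 * π) / 2 + (x - 1/2) * Real.log x - x) ∧
    Real.log (Real.Gamma x) - (Real.log (2 * π) / 2 + (x - 1/2) * Real.log x - x) ≤
      Ew ⌊x⌋₊ + 3 / (⌊x⌋₊ : ℝ) := by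
  have hn2 : 2 ≤ ⌊x⌋₊ := Nat.le_floor (by exact_mod_cast hx)
  obtain ⟨m, hm⟩ : ∃ m : ℕ, ⌊x⌋₊ = m + 1 := ⟨⌊x⌋₊ - 1, by omega⟩
  set n : ℕ := ⌊x⌋₊ with hndef
  clear_value n
  have hnx : (n:ℝ) ≤ x := by rw [hndef]; exact Nat.floor_le (by linarith)
  have hxn : x < n + 1 := by rw [hndef]; push_cast; exact Nat.lt_floor_add_one x
  have hn1 : (1:ℝ) ≤ n := by
    have : (1:ℕ) ≤ n := by omega
    exact_mod_cast this
  have hn0 : (0:ℝ) < n := by linarith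
  have hx0 : (0:ℝ) < x := by linarith
  set t : ℝ := x - n with htdef
  clear_value t
  have ht0 : 0 ≤ t := by rw [htdef]; linarith
  have ht1 : t < 1 := by rw [htdef]; linarith
  -- Gamma values at integers
  have hGn : Real.Gamma (n:ℝ) = m ! := by
    rw [hm]; push_cast; rw [Real.Gamma_nat_eq_factorial]
  have hGn1 : Real.Gamma ((n:ℝ) + 1) = n ! := by
    rw [show ((n:ℝ) + 1) = ((n:ℕ):ℝ) + 1 by norm_num, Real.Gamma_nat_eq_factorial]
  have hfacm : (0:ℝ) < m ! := by exact_mod_cast Nat.factorial_pos m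
  have hfacn : (0:ℝ) < n ! := by exact_mod_cast Nat.factorial_pos n
  have hlogfac : Real.log (n ! : ℝ) = Real.log (n:ℝ) + Real.log (m ! : ℝ) := by
    rw [hm]; push_cast [Nat.factorial_succ]
    rw [Real.log_mul (by positivity) hfacm.ne']
  -- convexity: upper bound on log Gamma x
  have hub : Real.log (Real.Gamma x) ≤ Real.log (n ! : ℝ) - (1 - t) * Real.log n := by
    have hc := Real.convexOn_log_Gamma.2 (Set.mem_Ioi.2 hn0)
      (Set.mem_Ioi.2 (by linarith : (0:ℝ) < (n:ℝ) + 1))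
      (by linarith : (0:ℝ) ≤ 1 - t) ht0 (by ring)
    simp only [smul_eq_mul, Function.comp_apply] at hc
    rw [show (1 - t) * (n:ℝ) + t * ((n:ℝ) + 1) = x by rw [htdef]; ring] at hc
    rw [hGn, hGn1] at hc
    calc Real.log (Real.Gamma x) ≤ (1 - t) * Real.log (m ! : ℝ) + t * Real.log (n ! : ℝ) := hc
      _ = Real.log (n ! : ℝ) - (1 - t) * Real.log n := by rw [hlogfac]; ring
  -- convexity: lower bound on log Gamma x
  have hlb : Real.log (n ! : ℝ) - (1 - t) * Real.log x ≤ Real.log (Real.Gamma x) := by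
    have hc := Real.convexOn_log_Gamma.2 (Set.mem_Ioi.2 hx0)
      (Set.mem_Ioi.2 (by linarith : (0:ℝ) < x + 1)) ht0
      (by linarith : (0:ℝ) ≤ 1 - t) (by ring)
    simp only [smul_eq_mul, Function.comp_apply] at hc
    rw [show t * x + (1 - t) * (x + 1) = (n:ℝ) + 1 by rw [htdef]; ring] at hc
    rw [hGn1, Real.Gamma_add_one hx0.ne',
      Real.log_mul hx0.ne' (Real.Gamma_pos_of_pos hx0).ne'] at hc
    linarith
  -- log bounds
  set u : ℝ := t / n with hudef
  clear_value u
  have hu0 : 0 ≤ u := by rw [hudef]; positivity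
  have hun : u * n = t := by rw [hudef]; field_simp
  have hu1 : u ≤ 1 := by rw [hudef, div_le_one hn0]; linarith
  have hxne : x / n = 1 + u := by rw [hudef, htdef]; field_simp; ring
  have hLdef : Real.log (x / n) = Real.log x - Real.log n := Real.log_div hx0.ne' hn0.ne'
  have hLup : Real.log (x / n) ≤ u := by
    have := Real.log_le_sub_one_of_pos (show (0:ℝ) < x / n by positivity)
    rw [hxne] at this ⊢; linarith
  have hLlow : u - u ^ 2 ≤ Real.log (x / n) := by
    have h1 : (0:ℝ) < 1 + u := by linarith
    have h2 := Real.log_le_sub_one_of_pos (show (0:ℝ) < (1 + u)⁻¹ by positivity)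
    rw [Real.log_inv] at h2
    have h3 : (1 + u) * (1 + u)⁻¹ = 1 := mul_inv_cancel₀ h1.ne'
    rw [hxne]
    nlinarith [sq_nonneg u, mul_nonneg (mul_nonneg hu0 hu0) hu0]
  have hr : 3 / (n:ℝ) * n = 3 := by field_simp
  have hxt : x = (n:ℝ) + t := by rw [htdef]; ring
  constructor
  · -- lower bound
    have hstep : -((n:ℝ) + 1/2) * Real.log (x / n) + t ≥ -(3 / (n:ℝ)) := by
      have h1 : -((n:ℝ) + 1/2) * Real.log (x / n) ≥ -((n:ℝ) + 1/2) * u := by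
        have := mul_le_mul_of_nonneg_left hLup (show (0:ℝ) ≤ (n:ℝ) + 1/2 by linarith)
        linarith
      have hid : -((n:ℝ) + 1/2) * u + t = -(u/2) := by linear_combination -hun
      have h2 : u/2 ≤ 3 / (n:ℝ) := by
        rw [div_le_div_iff₀ (by norm_num) hn0]
        nlinarith [hun, ht1, hn1]
      linarith
    rw [hLdef] at hstep
    have hsub : (x - t) * Real.log x = (n:ℝ) * Real.log x := by rw [hxt]; ring
    rw [Ew]
    linarith [hlb, hstep, hsub]
  · -- upper bound
    have hstep : -(x - 1/2) * Real.log (x / n) + t ≤ 3 / (n:ℝ) := by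
      have h1 : -(x - 1/2) * Real.log (x / n) ≤ -(x - 1/2) * (u - u ^ 2) := by
        have := mul_le_mul_of_nonneg_left hLlow (show (0:ℝ) ≤ x - 1/2 by linarith)
        linarith
      have h2 : -(x - 1/2) * (u - u ^ 2) + t ≤ 3 / (n:ℝ) := by
        rw [le_div_iff₀ hn0]
        have hEid : (-(x - 1/2) * (u - u ^ 2) + t) * n = t/2 + u*t*(t - 1/2) := by
          rw [hxt]; linear_combination (t + (u-1)*t + (1-u)*(1/2 - (n:ℝ))) * hun
        rw [hEid]
        nlinarith [mul_nonneg hu0 ht0, ht0, ht1, hu1, mul_nonneg (mul_nonneg hu0 ht0) ht0]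
      linarith
    rw [hLdef] at hstep
    have hsub2 : (x - t) * Real.log (n:ℝ) = (n:ℝ) * Real.log (n:ℝ) := by rw [hxt]; ring
    rw [Ew]
    linarith [hub, hstep, hsub2]

lemma logQ_tendsto : Tendsto (fun x : ℝ => Real.log (Real.Gamma x) -
    (Real.log (2 * π) / 2 + (x - 1/2) * Real.log x - x)) atTop (𝓝 0) := by
  have hfloor : Tendsto (fun x : ℝ => ⌊x⌋₊) atTop atTop := tendsto_nat_floor_atTop
  have h3n : Tendsto (fun n : ℕ => (3:ℝ) / n) atTop (𝓝 0) :=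
    tendsto_const_div_atTop_nhds_zero_nat 3
  have hg1 : Tendsto (fun x : ℝ => Ew ⌊x⌋₊ - 3 / (⌊x⌋₊ : ℝ)) atTop (𝓝 0) := by
    have := (Ew_tendsto.comp hfloor).sub (h3n.comp hfloor)
    simpa using this
  have hg2 : Tendsto (fun x : ℝ => Ew ⌊x⌋₊ + 3 / (⌊x⌋₊ : ℝ)) atTop (𝓝 0) := by
    have := (Ew_tendsto.comp hfloor).add (h3n.comp hfloor)
    simpa using this
  refine tendsto_of_tendsto_of_tendsto_of_le_of_le' hg1 hg2 ?_ ?_ <;>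
    filter_upwards [eventually_ge_atTop (2:ℝ)] with x hx
  · exact (key_sandwich x hx).1
  · exact (key_sandwich x hx).2

end StirlingAux

/-- G(λ) := Γ(c+λ)·Γ(1+a−c+(ε−1)λ)/Γ(a+ελ). -/
noncomputable def G (a c ε lam : ℝ) : ℝ :=
  Real.Gamma (c + lam) * Real.Gamma (1 + a - c + (ε - 1) * lam) / Real.Gamma (a + ε * lam)

open Topology in
/-- As λ → +∞, G(λ) is asymptotically equivalent to
    √(2πλ)·ε^{1/2−a−ελ}·(ε−1)^{1/2+a−c+(ε−1)λ}. -/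
theorem stmt_0 (a c ε : ℝ) (hε : 1 < ε) :
    Tendsto (fun lam : ℝ =>
        G a c ε lam /
          (Real.sqrt (2 * Real.pi * lam) * ε ^ ((1 : ℝ) / 2 - a - ε * lam) *
            (ε - 1) ^ ((1 : ℝ) / 2 + a - c + (ε - 1) * lam)))
      atTop (nhds 1) := by
  have hε0 : (0:ℝ) < ε := by linarith
  have hε1 : (0:ℝ) < ε - 1 := by linarith
  -- the three arguments tend to infinity
  have hx1top : Tendsto (fun lam : ℝ => c + lam) atTop atTop :=
    tendsto_atTop_add_const_left _ c tendsto_id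
  have hmu2 : Tendsto (fun lam : ℝ => (ε - 1) * lam) atTop atTop :=
    Tendsto.const_mul_atTop hε1 tendsto_id
  have hmu3 : Tendsto (fun lam : ℝ => ε * lam) atTop atTop :=
    Tendsto.const_mul_atTop hε0 tendsto_id
  have hx2top : Tendsto (fun lam : ℝ => 1 + a - c + (ε - 1) * lam) atTop atTop :=
    tendsto_atTop_add_const_left _ _ hmu2
  have hx3top : Tendsto (fun lam : ℝ => a + ε * lam) atTop atTop :=
    tendsto_atTop_add_const_left _ _ hmu3
  -- Stirling pieces
  have L1 := logQ_tendsto.comp hx1top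
  have L2 := logQ_tendsto.comp hx2top
  have L3 := logQ_tendsto.comp hx3top
  -- elementary pieces
  have T1 : Tendsto (fun lam : ℝ => (c + lam - 1/2) * Real.log ((c + lam) / lam))
      atTop (𝓝 c) := by
    refine (aux1 c (c - 1/2)).congr' ?_
    filter_upwards [eventually_gt_atTop (0:ℝ)] with lam hlam
    rw [show 1 + c / lam = (c + lam) / lam by field_simp; try ring]
    ring_nf
  have T2 : Tendsto (fun lam : ℝ => (1 + a - c + (ε - 1) * lam - 1/2) *
      Real.log ((1 + a - c + (ε - 1) * lam) / ((ε - 1) * lam))) atTop (𝓝 (1 + a - c)) := by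
    refine ((aux1 (1 + a - c) (1/2 + a - c)).comp hmu2).congr' ?_
    filter_upwards [eventually_gt_atTop (0:ℝ)] with lam hlam
    have hm : (ε - 1) * lam ≠ 0 := by positivity
    simp only [Function.comp_apply]
    rw [show 1 + (1 + a - c) / ((ε - 1) * lam) =
      (1 + a - c + (ε - 1) * lam) / ((ε - 1) * lam) by field_simp; try ring]
    ring_nf
  have T3 : Tendsto (fun lam : ℝ => (a + ε * lam - 1/2) *
      Real.log ((a + ε * lam) / (ε * lam))) atTop (𝓝 a) := by
    refine ((aux1 a (a - 1/2)).comp hmu3).congr' ?_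
    filter_upwards [eventually_gt_atTop (0:ℝ)] with lam hlam
    have hm : ε * lam ≠ 0 := by positivity
    simp only [Function.comp_apply]
    rw [show 1 + a / (ε * lam) = (a + ε * lam) / (ε * lam) by field_simp; try ring]
    ring_nf
  -- the combined limit
  have hM : Tendsto (fun lam : ℝ =>
      ((fun x : ℝ => Real.log (Real.Gamma x) -
        (Real.log (2 * π) / 2 + (x - 1/2) * Real.log x - x)) (c + lam)
      + (fun x : ℝ => Real.log (Real.Gamma x) -
        (Real.log (2 * π) / 2 + (x - 1/2) * Real.log x - x)) (1 + a - c + (ε - 1) * lam)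
      - (fun x : ℝ => Real.log (Real.Gamma x) -
        (Real.log (2 * π) / 2 + (x - 1/2) * Real.log x - x)) (a + ε * lam))
      + ((c + lam - 1/2) * Real.log ((c + lam) / lam)
        + (1 + a - c + (ε - 1) * lam - 1/2) *
            Real.log ((1 + a - c + (ε - 1) * lam) / ((ε - 1) * lam))
        - (a + ε * lam - 1/2) * Real.log ((a + ε * lam) / (ε * lam)) - 1))
      atTop (𝓝 0) := by
    have := ((L1.add L2).sub L3).add ((((T1.add T2).sub T3).sub_const 1))
    simp only [Function.comp] at this ⊢
    convert this using 2
    ring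
  have hexp : Tendsto (fun lam : ℝ => Real.exp ((fun lam : ℝ =>
      ((fun x : ℝ => Real.log (Real.Gamma x) -
        (Real.log (2 * π) / 2 + (x - 1/2) * Real.log x - x)) (c + lam)
      + (fun x : ℝ => Real.log (Real.Gamma x) -
        (Real.log (2 * π) / 2 + (x - 1/2) * Real.log x - x)) (1 + a - c + (ε - 1) * lam)
      - (fun x : ℝ => Real.log (Real.Gamma x) -
        (Real.log (2 * π) / 2 + (x - 1/2) * Real.log x - x)) (a + ε * lam))
      + ((c + lam - 1/2) * Real.log ((c + lam) / lam)
        + (1 + a - c + (ε - 1) * lam - 1/2) *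
            Real.log ((1 + a - c + (ε - 1) * lam) / ((ε - 1) * lam))
        - (a + ε * lam - 1/2) * Real.log ((a + ε * lam) / (ε * lam)) - 1)) lam))
      atTop (𝓝 1) := by
    have := (Real.continuous_exp.tendsto (0:ℝ)).comp hM
    simpa [Function.comp_def] using this
  refine hexp.congr' ?_
  filter_upwards [eventually_gt_atTop (0:ℝ), hx1top.eventually (eventually_gt_atTop (0:ℝ)),
    hx2top.eventually (eventually_gt_atTop (0:ℝ)), hx3top.eventually (eventually_gt_atTop (0:ℝ))]
    with lam hlam h1 h2 h3
  have hG1 := Real.Gamma_pos_of_pos h1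
  have hG2 := Real.Gamma_pos_of_pos h2
  have hG3 := Real.Gamma_pos_of_pos h3
  have hsq : (0:ℝ) < Real.sqrt (2 * π * lam) := Real.sqrt_pos.2 (by positivity)
  have hr1 : (0:ℝ) < ε ^ ((1 : ℝ) / 2 - a - ε * lam) := Real.rpow_pos_of_pos hε0 _
  have hr2 : (0:ℝ) < (ε - 1) ^ ((1 : ℝ) / 2 + a - c + (ε - 1) * lam) :=
    Real.rpow_pos_of_pos hε1 _
  have hGpos : 0 < G a c ε lam := by
    rw [G]; exact div_pos (mul_pos hG1 hG2) hG3
  have hfpos : 0 < G a c ε lam /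
      (Real.sqrt (2 * Real.pi * lam) * ε ^ ((1 : ℝ) / 2 - a - ε * lam) *
        (ε - 1) ^ ((1 : ℝ) / 2 + a - c + (ε - 1) * lam)) :=
    div_pos hGpos (mul_pos (mul_pos hsq hr1) hr2)
  rw [← Real.exp_log hfpos]
  congr 1
  rw [Real.log_div hGpos.ne' (mul_pos (mul_pos hsq hr1) hr2).ne', G,
    Real.log_div (mul_pos hG1 hG2).ne' hG3.ne', Real.log_mul hG1.ne' hG2.ne',
    Real.log_mul (mul_pos hsq hr1).ne' hr2.ne', Real.log_mul hsq.ne' hr1.ne',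
    Real.log_sqrt (by positivity), Real.log_rpow hε0, Real.log_rpow hε1,
    Real.log_mul (by positivity : (2*π : ℝ) ≠ 0) hlam.ne',
    Real.log_div h1.ne' hlam.ne', Real.log_div h2.ne' (by positivity : ((ε-1)*lam : ℝ) ≠ 0),
    Real.log_div h3.ne' (by positivity : (ε*lam : ℝ) ≠ 0),
    Real.log_mul hε1.ne' hlam.ne', Real.log_mul hε0.ne' hlam.ne']
  ring
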